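/- arXiv:1906.09156 — 8 statements merged into one kernel-verified Lean document; each statement's English description precedes it below -/
import Mathlib

section
/- Let (w_k) and (v_k) be two probability distributions on the non-negative integers with all v_k > 0. Then the Kullback–Leibler divergence D = ∑_k w_k log(w_k/v_k) satisfies D ≥ (1/2) ∑_k (w_k - v_k)² / max(w_k, v_k). -/
/-- Generic monotonicity helper on `Ioi 0`. -/
private lemma mono_aux (f f' : ℝ → ℝ)
    (hf : ∀ x ∈ Set.Ioi (0:ℝ), HasDerivAt f (f' x) x)
    (hf' : ∀ x ∈ Set.Ioi (0:ℝ), 0 ≤ f' x) :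
    MonotoneOn f (Set.Ioi 0) := by
  apply monotoneOn_of_deriv_nonneg (convex_Ioi 0)
  · exact fun x hx => (hf x hx).continuousAt.continuousWithinAt
  · rw [interior_Ioi]
    exact fun x hx => (hf x hx).differentiableAt.differentiableWithinAt
  · rw [interior_Ioi]
    intro x hx
    rw [(hf x hx).deriv]
    exact hf' x hx

/-- `log x ≥ 2(x-1)/(x+1)` for `x ≥ 1`. -/
private lemma log_ge_aux {x : ℝ} (hx : 1 ≤ x) :
    2 * (x - 1) / (x + 1) ≤ Real.log x := by
  set f : ℝ → ℝ := fun y => Real.log y - 2 * (y - 1) / (y + 1) with hf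
  have hmono : MonotoneOn f (Set.Ioi 0) := by
    apply mono_aux f (fun y => (y - 1) ^ 2 / (y * (y + 1) ^ 2))
    · intro y hy
      have hy0 : (0:ℝ) < y := hy
      have hy1 : y + 1 ≠ 0 := by positivity
      have h1 : HasDerivAt Real.log y⁻¹ y := Real.hasDerivAt_log hy0.ne'
      have h2 : HasDerivAt (fun z : ℝ => 2 * (z - 1) / (z + 1))
          ((2 * (y + 1) - 2 * (y - 1) * 1) / (y + 1) ^ 2) y := by
        have ha : HasDerivAt (fun z : ℝ => 2 * (z - 1)) 2 y := by
          simpa using ((hasDerivAt_id y).sub_const 1).const_mul 2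
        have hb : HasDerivAt (fun z : ℝ => z + 1) 1 y := (hasDerivAt_id y).add_const 1
        exact ha.div hb hy1
      have := h1.sub h2
      refine this.congr_deriv ?_
      field_simp
      ring
    · intro y hy
      have hy0 : (0:ℝ) < y := hy
      positivity
  have h1 : f 1 ≤ f x := hmono (by norm_num) (lt_of_lt_of_le one_pos hx) hx
  have : f 1 = 0 := by simp [hf]
  rw [this] at h1
  simp only [hf] at h1
  linarith

/-- `log x ≤ (x^2-1)/(2x)` for `x ≥ 1`. -/
private lemma log_le_aux {x : ℝ} (hx : 1 ≤ x) :
    Real.log x ≤ (x ^ 2 - 1) / (2 * x) := by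
  set f : ℝ → ℝ := fun y => (y ^ 2 - 1) / (2 * y) - Real.log y with hf
  have hmono : MonotoneOn f (Set.Ioi 0) := by
    apply mono_aux f (fun y => (y - 1) ^ 2 / (2 * y ^ 2))
    · intro y hy
      have hy0 : (0:ℝ) < y := hy
      have hy1 : 2 * y ≠ 0 := by positivity
      have h1 : HasDerivAt Real.log y⁻¹ y := Real.hasDerivAt_log hy0.ne'
      have h2 : HasDerivAt (fun z : ℝ => (z ^ 2 - 1) / (2 * z))
          ((2 * y * (2 * y) - (y ^ 2 - 1) * 2) / (2 * y) ^ 2) y := by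
        have ha : HasDerivAt (fun z : ℝ => z ^ 2 - 1) (2 * y) y := by
          simpa using (hasDerivAt_pow 2 y).sub_const 1
        have hb : HasDerivAt (fun z : ℝ => 2 * z) 2 y := by
          simpa using (hasDerivAt_id y).const_mul 2
        exact ha.div hb hy1
      have := h2.sub h1
      refine this.congr_deriv ?_
      field_simp
      ring
    · intro y hy
      have hy0 : (0:ℝ) < y := hy
      positivity
  have h1 : f 1 ≤ f x := hmono (by norm_num) (lt_of_lt_of_le one_pos hx) hx
  have : f 1 = 0 := by simp [hf]
  rw [this] at h1
  simp only [hf] at h1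
  linarith

/-- The key pointwise inequality. -/
private lemma key (a b : ℝ) (ha : 0 ≤ a) (hb : 0 < b) :
    (a - b) + (a - b) ^ 2 / (2 * max a b) ≤ a * Real.log (a / b) := by
  rcases eq_or_lt_of_le ha with h0 | ha'
  · rw [← h0]
    have hmax : max (0:ℝ) b = b := max_eq_right hb.le
    rw [hmax]
    have : (0 - b) ^ 2 / (2 * b) = b / 2 := by
      field_simp
      ring
    rw [this]
    simp
    linarith
  · rcases le_total a b with hab | hab
    · -- a ≤ b : use log_le_aux at x = b/a
      have hmax : max a b = b := max_eq_right hab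
      rw [hmax]
      have hx : (1:ℝ) ≤ b / a := (one_le_div ha').mpr hab
      have hlog := log_le_aux hx
      have hlogeq : Real.log (a / b) = -Real.log (b / a) := by
        rw [← Real.log_inv]
        congr 1
        field_simp
      rw [hlogeq]
      have h2 : a * Real.log (b / a) ≤ a * ((b / a) ^ 2 - 1) / (2 * (b / a)) := by
        rw [mul_div_assoc]
        exact mul_le_mul_of_nonneg_left hlog ha'.le
      have h3 : a * ((b / a) ^ 2 - 1) / (2 * (b / a)) = (b ^ 2 - a ^ 2) / (2 * b) := by
        field_simp
      rw [h3] at h2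
      have h4 : (a - b) + (a - b) ^ 2 / (2 * b) = -((b ^ 2 - a ^ 2) / (2 * b)) := by
        field_simp
        ring
      rw [h4]
      linarith
    · -- b ≤ a : use log_ge_aux at x = a/b
      have hmax : max a b = a := max_eq_left hab
      rw [hmax]
      have hx : (1:ℝ) ≤ a / b := (one_le_div hb).mpr hab
      have hlog := log_ge_aux hx
      have h2 : a * (2 * (a / b - 1) / (a / b + 1)) ≤ a * Real.log (a / b) :=
        mul_le_mul_of_nonneg_left hlog ha'.le
      have h3 : a * (2 * (a / b - 1) / (a / b + 1)) = 2 * a * (a - b) / (a + b) := by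
        field_simp
      rw [h3] at h2
      refine le_trans ?_ h2
      have h5 : 2 * a * (a - b) / (a + b) - ((a - b) + (a - b) ^ 2 / (2 * a)) =
          (a - b) ^ 3 / (2 * a * (a + b)) := by
        field_simp
        ring
      have h6 : 0 ≤ (a - b) ^ 3 / (2 * a * (a + b)) := by
        apply div_nonneg
        · exact pow_nonneg (by linarith) 3
        · positivity
      linarith

theorem stmt_1 (w v : ℕ → ℝ)
    (hw : ∀ k, 0 ≤ w k) (hv : ∀ k, 0 < v k)
    (hw1 : ∑' k, w k = 1) (hv1 : ∑' k, v k = 1)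
    (hD : Summable fun k => w k * Real.log (w k / v k)) :
    (∑' k, w k * Real.log (w k / v k)) ≥
      (1 / 2) * ∑' k, (w k - v k) ^ 2 / max (w k) (v k) := by
  -- summability of w and v
  have hSw : Summable w := by
    by_contra h
    rw [tsum_eq_zero_of_not_summable h] at hw1
    norm_num at hw1
  have hSv : Summable v := by
    by_contra h
    rw [tsum_eq_zero_of_not_summable h] at hv1
    norm_num at hv1
  have hmaxpos : ∀ k, 0 < max (w k) (v k) := fun k => lt_max_of_lt_right (hv k)
  -- summability of the quadratic term
  have hbound : ∀ k, (w k - v k) ^ 2 / max (w k) (v k) ≤ w k + v k := by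
    intro k
    rw [div_le_iff₀ (hmaxpos k)]
    have h1 : |w k - v k| ≤ max (w k) (v k) := by
      rw [abs_le]
      constructor
      · have := le_max_right (w k) (v k); linarith [hw k]
      · have := le_max_left (w k) (v k); linarith [(hv k).le]
    have h2 : |w k - v k| ≤ w k + v k := by
      rw [abs_le]; constructor <;> [linarith [hw k, (hv k).le]; linarith [hw k, (hv k).le]]
    calc (w k - v k) ^ 2 = |w k - v k| * |w k - v k| := by
          rw [abs_mul_abs_self]; ring
      _ ≤ (w k + v k) * max (w k) (v k) :=
          mul_le_mul h2 h1 (abs_nonneg _) (by linarith [hw k, (hv k).le])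
  have hSq : Summable (fun k => (w k - v k) ^ 2 / max (w k) (v k)) := by
    refine Summable.of_nonneg_of_le (fun k => ?_) hbound (hSw.add hSv)
    have := hmaxpos k
    positivity
  have hSd : Summable (fun k => w k - v k) := hSw.sub hSv
  -- the lower-bound function
  have hg : Summable (fun k => (w k - v k) + (1/2) * ((w k - v k) ^ 2 / max (w k) (v k))) :=
    hSd.add (hSq.mul_left _)
  have hpt : ∀ k, (w k - v k) + (1/2) * ((w k - v k) ^ 2 / max (w k) (v k)) ≤
      w k * Real.log (w k / v k) := by
    intro k
    have := key (w k) (v k) (hw k) (hv k)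
    have heq : (w k - v k) ^ 2 / (2 * max (w k) (v k)) =
        (1/2) * ((w k - v k) ^ 2 / max (w k) (v k)) := by
      have h0 := (hmaxpos k).ne'
      field_simp
    rw [heq] at this
    linarith
  have hle := Summable.tsum_le_tsum hpt hg hD
  rw [Summable.tsum_add hSd (hSq.mul_left _), Summable.tsum_sub hSw hSv, hw1, hv1, tsum_mul_left] at hle
  simp only [sub_self, zero_add] at hle
  exact hle
end

section
/- Let f(k) = (λ^k / k!) · e^{-λ} be the Poisson probability mass function with parameter λ > 0. Then for every integer k ≥ 1, f(k) ≤ 1/√(2πk). -/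
open Real

lemma sqrt_pi_le_stirlingSeq (n : ℕ) : Real.sqrt Real.pi ≤ Stirling.stirlingSeq (n + 1) := by
  have hpos : ∀ m : ℕ, 0 < Stirling.stirlingSeq (m + 1) := by
    intro m
    unfold Stirling.stirlingSeq
    positivity
  have hanti : Antitone (fun m => Stirling.stirlingSeq (m + 1)) := by
    intro a b hab
    have := Stirling.log_stirlingSeq'_antitone hab
    simp only [Function.comp] at this
    exact (Real.log_le_log_iff (hpos b) (hpos a)).mp this
  have htend : Filter.Tendsto (fun m => Stirling.stirlingSeq (m + 1)) Filter.atTop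
      (nhds (Real.sqrt Real.pi)) :=
    (Stirling.tendsto_stirlingSeq_sqrt_pi).comp (Filter.tendsto_add_atTop_nat 1)
  exact hanti.le_of_tendsto htend n

lemma factorial_lower (k : ℕ) (hk : 1 ≤ k) :
    Real.sqrt (2 * Real.pi * k) * (k / Real.exp 1) ^ k ≤ (Nat.factorial k : ℝ) := by
  obtain ⟨n, rfl⟩ := Nat.exists_eq_add_of_le hk
  have h := sqrt_pi_le_stirlingSeq n
  rw [add_comm 1 n] at *
  unfold Stirling.stirlingSeq at h
  have hden : 0 < Real.sqrt (2 * (n + 1 : ℕ)) * ((n + 1 : ℕ) / Real.exp 1) ^ (n + 1) := by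
    positivity
  rw [le_div_iff₀ hden] at h
  calc Real.sqrt (2 * Real.pi * (n + 1 : ℕ)) * ((n + 1 : ℕ) / Real.exp 1) ^ (n + 1)
      = Real.sqrt Real.pi * (Real.sqrt (2 * (n + 1 : ℕ)) * ((n + 1 : ℕ) / Real.exp 1) ^ (n + 1)) := by
        rw [show 2 * Real.pi * ((n+1 : ℕ) : ℝ) = Real.pi * (2 * ((n+1 : ℕ) : ℝ)) by ring,
          Real.sqrt_mul Real.pi_pos.le, mul_assoc]
    _ ≤ _ := h

theorem stmt_4 (lam : ℝ) (hlam : 0 < lam) (k : ℕ) (hk : 1 ≤ k) :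
    lam ^ k / (Nat.factorial k) * Real.exp (-lam) ≤
      1 / Real.sqrt (2 * Real.pi * k) := by
  have hkpos : (0 : ℝ) < k := by exact_mod_cast hk
  have hfac : (0 : ℝ) < Nat.factorial k := by exact_mod_cast (Nat.factorial_pos k)
  have hsq : 0 < Real.sqrt (2 * Real.pi * k) := by positivity
  -- Step 1: lam^k * exp(-lam) ≤ k^k * exp(-k)
  have hmax : lam ^ k * Real.exp (-lam) ≤ (k : ℝ) ^ k * Real.exp (-(k : ℝ)) := by
    have hlog : Real.log (lam / k) ≤ lam / k - 1 :=
      Real.log_le_sub_one_of_pos (by positivity)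
    have : (k : ℝ) * Real.log lam - lam ≤ (k : ℝ) * Real.log k - (k : ℝ) := by
      rw [Real.log_div (ne_of_gt hlam) (ne_of_gt hkpos)] at hlog
      have := mul_le_mul_of_nonneg_left hlog hkpos.le
      rw [mul_sub, mul_sub, mul_div_cancel₀ _ (ne_of_gt hkpos), mul_one] at this
      linarith
    have h1 : lam ^ k * Real.exp (-lam) = Real.exp ((k : ℝ) * Real.log lam - lam) := by
      conv_lhs => rw [← Real.exp_log hlam]
      rw [← Real.exp_nat_mul, ← Real.exp_add]
      congr 1; rw [Real.exp_log hlam]; ring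
    have h2 : (k : ℝ) ^ k * Real.exp (-(k : ℝ)) = Real.exp ((k : ℝ) * Real.log k - k) := by
      conv_lhs => rw [← Real.exp_log hkpos]
      rw [← Real.exp_nat_mul, ← Real.exp_add]
      congr 1; rw [Real.exp_log hkpos]; ring
    rw [h1, h2]
    exact Real.exp_le_exp.mpr this
  -- Step 2: k! ≥ √(2πk) (k/e)^k
  have hfl := factorial_lower k hk
  have hkk : ((k : ℝ) / Real.exp 1) ^ k = (k : ℝ) ^ k * Real.exp (-(k : ℝ)) := by
    rw [div_pow, ← Real.exp_nat_mul, mul_one, Real.exp_neg, div_eq_mul_inv]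
  rw [hkk] at hfl
  rw [div_mul_eq_mul_div, div_le_div_iff₀ hfac hsq, one_mul]
  calc lam ^ k * Real.exp (-lam) * Real.sqrt (2 * Real.pi * k)
      ≤ (k : ℝ) ^ k * Real.exp (-(k : ℝ)) * Real.sqrt (2 * Real.pi * k) := by
        exact mul_le_mul_of_nonneg_right hmax hsq.le
    _ ≤ (Nat.factorial k : ℝ) := by linarith [hfl]
end

section
/- Let f(k) = (λ^k / k!) · e^{-λ} with λ > 0. For every integer k ≥ 1 with k ≥ λ, f(k) ≥ (1/(e√k)) · exp(-(k-λ)²/(2λ)). -/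
open Real

lemma aux_log_ineq (x : ℝ) (hx : 0 ≤ x) :
    (1 + x) * Real.log (1 + x) ≤ x + x ^ 2 / 2 := by
  set g : ℝ → ℝ := fun t => t + t ^ 2 / 2 - (1 + t) * Real.log (1 + t) with hg
  have hderiv : ∀ y : ℝ, 0 < 1 + y →
      HasDerivAt g (y - Real.log (1 + y)) y := by
    intro y hy
    have h1 : HasDerivAt (fun t : ℝ => 1 + t) 1 y := by
      simpa using (hasDerivAt_id y).const_add (1 : ℝ)
    have h2 : HasDerivAt (fun t : ℝ => Real.log (1 + t)) (1 / (1 + y)) y := by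
      exact ((Real.hasDerivAt_log hy.ne').comp y h1).congr_deriv (by simp)
    have h3 : HasDerivAt (fun t : ℝ => (1 + t) * Real.log (1 + t))
        (1 * Real.log (1 + y) + (1 + y) * (1 / (1 + y))) y := h1.mul h2
    have h4 : HasDerivAt (fun t : ℝ => t + t ^ 2 / 2) (1 + y) y := by
      exact ((hasDerivAt_id' y).add ((hasDerivAt_pow 2 y).div_const 2)).congr_deriv (by norm_num)
    have h5 := h4.sub h3
    exact h5.congr_deriv (by rw [mul_one_div_cancel hy.ne']; ring)
  have hmono : MonotoneOn g (Set.Ici (0 : ℝ)) := by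
    apply monotoneOn_of_deriv_nonneg (convex_Ici 0)
    · apply ContinuousOn.sub (by fun_prop)
      apply ContinuousOn.mul (by fun_prop)
      apply ContinuousOn.log (by fun_prop)
      intro t ht
      simp only [Set.mem_Ici] at ht
      positivity
    · intro y hy
      rw [interior_Ici] at hy
      simp only [Set.mem_Ioi] at hy
      exact (hderiv y (by linarith)).differentiableAt.differentiableWithinAt
    · intro y hy
      rw [interior_Ici] at hy
      simp only [Set.mem_Ioi] at hy
      rw [(hderiv y (by linarith)).deriv]
      have : Real.log (1 + y) ≤ (1 + y) - 1 := Real.log_le_sub_one_of_pos (by linarith)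
      linarith
  have h0 : g 0 ≤ g x := hmono (by simp) (by simpa using hx) hx
  simp only [hg] at h0
  norm_num at h0
  linarith

lemma factorial_le_stirling (k : ℕ) (hk : 1 ≤ k) :
    (Nat.factorial k : ℝ) ≤ Real.exp 1 * Real.sqrt k * ((k : ℝ) / Real.exp 1) ^ k := by
  have hks : Stirling.stirlingSeq k ≤ Stirling.stirlingSeq 1 := by
    obtain ⟨m, rfl⟩ := Nat.exists_eq_add_of_le hk
    have h := Stirling.log_stirlingSeq'_antitone (Nat.zero_le m)
    simp only [Function.comp, Nat.succ_eq_add_one] at h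
    have h1 : (0 : ℝ) < Stirling.stirlingSeq (m + 1) := Stirling.stirlingSeq'_pos m
    have h2 : (0 : ℝ) < Stirling.stirlingSeq (0 + 1) := Stirling.stirlingSeq'_pos 0
    rw [show 1 + m = m + 1 by ring]
    calc Stirling.stirlingSeq (m + 1) ≤ Stirling.stirlingSeq (0 + 1) :=
          (Real.log_le_log_iff h1 h2).mp h
      _ = Stirling.stirlingSeq 1 := by norm_num
  rw [Stirling.stirlingSeq_one] at hks
  have hk0 : (0 : ℝ) < k := by exact_mod_cast hk
  have hfac : (Nat.factorial k : ℝ) =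
      Stirling.stirlingSeq k * (Real.sqrt (2 * k) * ((k : ℝ) / Real.exp 1) ^ k) := by
    rw [Stirling.stirlingSeq, div_mul_cancel₀]
    positivity
  rw [hfac]
  have hsqrt : Real.sqrt (2 * (k : ℝ)) = Real.sqrt 2 * Real.sqrt k := by
    rw [Real.sqrt_mul (by norm_num)]
  have hpos : (0 : ℝ) < Real.sqrt (2 * k) * ((k : ℝ) / Real.exp 1) ^ k := by positivity
  calc Stirling.stirlingSeq k * (Real.sqrt (2 * k) * ((k : ℝ) / Real.exp 1) ^ k)
      ≤ (Real.exp 1 / Real.sqrt 2) * (Real.sqrt (2 * k) * ((k : ℝ) / Real.exp 1) ^ k) :=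
        mul_le_mul_of_nonneg_right hks hpos.le
    _ = Real.exp 1 * Real.sqrt k * ((k : ℝ) / Real.exp 1) ^ k := by
        rw [hsqrt]
        have h2 : (0:ℝ) < Real.sqrt 2 := by positivity
        field_simp

theorem stmt_6 (lam : ℝ) (hlam : 0 < lam) (k : ℕ) (hk1 : 1 ≤ k)
    (hk : lam ≤ (k : ℝ)) :
    lam ^ k / (Nat.factorial k) * Real.exp (-lam) ≥
      1 / (Real.exp 1 * Real.sqrt k) * Real.exp (-((k : ℝ) - lam) ^ 2 / (2 * lam)) := by
  have hK0 : (0 : ℝ) < k := by exact_mod_cast hk1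
  have he : (0 : ℝ) < Real.exp 1 := Real.exp_pos 1
  -- Step B
  have hB : (k : ℝ) * (Real.log k - Real.log lam) ≤
      ((k : ℝ) - lam) + ((k : ℝ) - lam) ^ 2 / (2 * lam) := by
    have h := aux_log_ineq (((k : ℝ) - lam) / lam) (div_nonneg (by linarith) hlam.le)
    have h1 : 1 + ((k : ℝ) - lam) / lam = (k : ℝ) / lam := by field_simp; ring
    rw [h1, Real.log_div hK0.ne' hlam.ne'] at h
    have h2 := mul_le_mul_of_nonneg_left h hlam.le
    calc (k : ℝ) * (Real.log k - Real.log lam)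
        = lam * ((k : ℝ) / lam * (Real.log k - Real.log lam)) := by field_simp
      _ ≤ lam * (((k : ℝ) - lam) / lam + (((k : ℝ) - lam) / lam) ^ 2 / 2) := h2
      _ = ((k : ℝ) - lam) + ((k : ℝ) - lam) ^ 2 / (2 * lam) := by
          field_simp
  -- exponential form inequality
  have hexp : Real.exp (-((k : ℝ) - lam) ^ 2 / (2 * lam)) ≤
      lam ^ k * Real.exp (k : ℝ) * Real.exp (-lam) / (k : ℝ) ^ k := by
    have hlamk : lam ^ k = Real.exp ((k : ℝ) * Real.log lam) := by
      rw [Real.exp_nat_mul, Real.exp_log hlam]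
    have hKk : (k : ℝ) ^ k = Real.exp ((k : ℝ) * Real.log k) := by
      rw [Real.exp_nat_mul, Real.exp_log hK0]
    rw [hlamk, hKk, ← Real.exp_add, ← Real.exp_add, ← Real.exp_sub, neg_div, Real.exp_le_exp]
    linarith [hB]
  -- combine with factorial bound
  have hfac := factorial_le_stirling k hk1
  have hfpos : (0 : ℝ) < Nat.factorial k := by exact_mod_cast Nat.factorial_pos k
  have h1 : lam ^ k / (Real.exp 1 * Real.sqrt k * ((k : ℝ) / Real.exp 1) ^ k) * Real.exp (-lam)
      ≤ lam ^ k / (Nat.factorial k) * Real.exp (-lam) := by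
    have hden : (0 : ℝ) < Real.exp 1 * Real.sqrt k * ((k : ℝ) / Real.exp 1) ^ k := by positivity
    gcongr
  refine ge_iff_le.mpr (le_trans ?_ h1)
  have hsk : (0 : ℝ) < Real.sqrt k := Real.sqrt_pos.mpr hK0
  have heq : lam ^ k / (Real.exp 1 * Real.sqrt k * ((k : ℝ) / Real.exp 1) ^ k) * Real.exp (-lam)
      = 1 / (Real.exp 1 * Real.sqrt k) * (lam ^ k * Real.exp (k : ℝ) * Real.exp (-lam) / (k : ℝ) ^ k) := by
    rw [div_pow]
    have hek : Real.exp 1 ^ k = Real.exp (k : ℝ) := by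
      rw [← Real.exp_nat_mul]; norm_num
    rw [hek]
    have hKk : (0 : ℝ) < (k : ℝ) ^ k := by positivity
    have hE : (0 : ℝ) < Real.exp ((k : ℝ)) := Real.exp_pos _
    field_simp
  rw [heq]
  exact mul_le_mul_of_nonneg_left hexp (by positivity)
end

section
/- Let f(k) = (λ^k / k!) · e^{-λ} with λ > 0. For every integer k with 1 ≤ k ≤ 2λ, f(k) ≥ (1/(e√k)) · exp(-(k-λ)²/λ). -/
open Real

lemma stirling_upper (k : ℕ) (hk1 : 1 ≤ k) :
    ((Nat.factorial k : ℝ)) ≤ Real.exp 1 * Real.sqrt k * ((k : ℝ) / Real.exp 1) ^ k := by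
  have hk0 : (0:ℝ) < k := by exact_mod_cast hk1
  have hden : (0:ℝ) < Real.sqrt (2 * k) * ((k : ℝ) / Real.exp 1) ^ k := by positivity
  have hpos : 0 < Stirling.stirlingSeq k := by
    rw [Stirling.stirlingSeq]
    have : (0:ℝ) < (Nat.factorial k : ℝ) := by positivity
    positivity
  have h1 : Real.log (Stirling.stirlingSeq k) ≤ Real.log (Stirling.stirlingSeq 1) := by
    have := Stirling.log_stirlingSeq'_antitone (Nat.zero_le (k - 1))
    simpa [Function.comp, Nat.succ_eq_add_one, Nat.sub_add_cancel hk1] using this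
  have hpos1 : 0 < Stirling.stirlingSeq 1 := by
    rw [Stirling.stirlingSeq_one]; positivity
  have h2 : Stirling.stirlingSeq k ≤ Real.exp 1 / Real.sqrt 2 := by
    rw [← Stirling.stirlingSeq_one]
    exact (Real.log_le_log_iff hpos hpos1).mp h1
  have hfac : (Nat.factorial k : ℝ) =
      Stirling.stirlingSeq k * (Real.sqrt (2 * k) * ((k : ℝ) / Real.exp 1) ^ k) := by
    rw [Stirling.stirlingSeq, div_mul_cancel₀ _ hden.ne']
  rw [hfac]
  calc Stirling.stirlingSeq k * (Real.sqrt (2 * k) * ((k : ℝ) / Real.exp 1) ^ k)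
      ≤ (Real.exp 1 / Real.sqrt 2) * (Real.sqrt (2 * k) * ((k : ℝ) / Real.exp 1) ^ k) := by
        apply mul_le_mul_of_nonneg_right h2 hden.le
    _ = Real.exp 1 * Real.sqrt k * ((k : ℝ) / Real.exp 1) ^ k := by
        rw [Real.sqrt_mul (by norm_num : (0:ℝ) ≤ 2)]
        have h2' : Real.sqrt 2 ≠ 0 := by positivity
        field_simp

theorem stmt_7 (lam : ℝ) (hlam : 0 < lam) (k : ℕ) (hk1 : 1 ≤ k)
    (hk2 : (k : ℝ) ≤ 2 * lam) :
    lam ^ k / (Nat.factorial k) * Real.exp (-lam) ≥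
      1 / (Real.exp 1 * Real.sqrt k) * Real.exp (-((k : ℝ) - lam) ^ 2 / lam) := by
  have hk0 : (0:ℝ) < k := by exact_mod_cast hk1
  set E : ℝ := k * Real.log lam + k - lam - k * Real.log k with hE
  -- exponent inequality
  have hexp : -((k : ℝ) - lam) ^ 2 / lam ≤ E := by
    have hlog : Real.log ((k : ℝ) / lam) ≤ (k : ℝ) / lam - 1 :=
      Real.log_le_sub_one_of_pos (by positivity)
    rw [Real.log_div hk0.ne' hlam.ne'] at hlog
    have hmul := mul_le_mul_of_nonneg_left hlog hk0.le
    rw [hE]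
    have h1 : (k:ℝ) * ((k:ℝ) / lam - 1) = (k:ℝ)^2 / lam - k := by field_simp
    rw [h1] at hmul
    have h2 : -((k : ℝ) - lam) ^ 2 / lam = -((k:ℝ)^2/lam) + 2*k - lam := by
      field_simp; ring
    rw [mul_sub] at hmul
    linarith [hmul, h2]
  -- rewrite powers as exponentials
  have hlamk : lam ^ k = Real.exp ((k : ℝ) * Real.log lam) := by
    rw [← Real.exp_log hlam, ← Real.exp_nat_mul, Real.log_exp]
  have hke : ((k : ℝ) / Real.exp 1) ^ k = Real.exp ((k : ℝ) * (Real.log k - 1)) := by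
    have : (k : ℝ) / Real.exp 1 = Real.exp (Real.log k - 1) := by
      rw [Real.exp_sub, Real.exp_log hk0]
    rw [this, ← Real.exp_nat_mul]
  have hfacpos : (0:ℝ) < (Nat.factorial k : ℝ) := by positivity
  have hst := stirling_upper k hk1
  have hdenpos : (0:ℝ) < Real.exp 1 * Real.sqrt k := by positivity
  have key : lam ^ k / (Real.exp 1 * Real.sqrt k * ((k : ℝ) / Real.exp 1) ^ k)
      * Real.exp (-lam) = 1 / (Real.exp 1 * Real.sqrt k) * Real.exp E := by
    have e2 : Real.exp E = Real.exp ((k:ℝ) * Real.log lam) * Real.exp (-lam)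
        / Real.exp ((k:ℝ) * (Real.log k - 1)) := by
      rw [← Real.exp_add, ← Real.exp_sub]; congr 1; rw [hE]; ring
    have hb : (0:ℝ) < Real.exp ((k:ℝ) * (Real.log k - 1)) := Real.exp_pos _
    rw [hlamk, hke, e2]
    field_simp
  calc 1 / (Real.exp 1 * Real.sqrt k) * Real.exp (-((k : ℝ) - lam) ^ 2 / lam)
      ≤ 1 / (Real.exp 1 * Real.sqrt k) * Real.exp E := by
        apply mul_le_mul_of_nonneg_left (Real.exp_le_exp.mpr hexp) (by positivity)
    _ = lam ^ k / (Real.exp 1 * Real.sqrt k * ((k : ℝ) / Real.exp 1) ^ k)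
        * Real.exp (-lam) := key.symm
    _ ≤ lam ^ k / (Nat.factorial k) * Real.exp (-lam) := by
        apply mul_le_mul_of_nonneg_right _ (Real.exp_pos _).le
        apply div_le_div_of_nonneg_left (by positivity) hfacpos hst
end

section
/- For all p_1,…,p_n ∈ [0,1], writing r > 0 and g(re^{iθ}) = ∏_{l=1}^n (q_l + p_l r e^{iθ}) with q_l = 1 - p_l, one has for every θ ∈ [-π, π]: ∏_{l=1}^n |q_l + p_l r e^{iθ}| / (q_l + p_l r) ≤ exp{ -(2θ²/π²) ∑_{l=1}^n q_l p_l r / (q_l + p_l r)² }. -/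
open scoped BigOperators

lemma factor_bound (p r θ : ℝ) (hp0 : 0 ≤ p) (hp1 : p ≤ 1) (hr : 0 < r)
    (hθ : |θ| ≤ Real.pi) :
    ‖(1 - p : ℝ) + (p : ℂ) * r * Complex.exp (θ * Complex.I)‖ /
      ((1 - p) + p * r) ≤
    Real.exp (-(2 * θ ^ 2 / Real.pi ^ 2) * ((1 - p) * p * r / ((1 - p) + p * r) ^ 2)) := by
  have hpi : (0:ℝ) < Real.pi := Real.pi_pos
  have hs : 0 < (1 - p) + p * r := by
    rcases lt_or_eq_of_le hp1 with h | h
    · nlinarith [mul_nonneg hp0 hr.le]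
    · rw [h]; simpa using hr
  set s : ℝ := (1 - p) + p * r with hs_def
  set A : ℝ := (1 - p) * p * r with hA_def
  have hA : 0 ≤ A := by
    apply mul_nonneg (mul_nonneg (by linarith) hp0) hr.le
  -- rewrite the complex number in a + b*I form
  have hz : ((1 - p : ℝ) + (p : ℂ) * r * Complex.exp (θ * Complex.I)) =
      Complex.ofReal ((1 - p) + p * r * Real.cos θ) +
        Complex.ofReal (p * r * Real.sin θ) * Complex.I := by
    rw [Complex.exp_mul_I, ← Complex.ofReal_cos, ← Complex.ofReal_sin]
    push_cast
    ring
  have habs2 : (‖(1 - p : ℝ) + (p : ℂ) * r * Complex.exp (θ * Complex.I)‖) ^ 2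
      = s ^ 2 - 4 * A * Real.sin (θ / 2) ^ 2 := by
    rw [hz, Complex.sq_norm, Complex.normSq_add_mul_I]
    have h1 : Real.sin (θ / 2) ^ 2 = 1 / 2 - Real.cos (2 * (θ / 2)) / 2 :=
      Real.sin_sq_eq_half_sub (θ / 2)
    have h2 : Real.sin θ ^ 2 + Real.cos θ ^ 2 = 1 := Real.sin_sq_add_cos_sq θ
    rw [show 2 * (θ / 2) = θ by ring] at h1
    rw [hs_def, hA_def, h1]
    linear_combination (p * r) ^ 2 * h2
  -- sin bound
  have hsin : θ ^ 2 / Real.pi ^ 2 ≤ Real.sin (θ / 2) ^ 2 := by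
    have h1 : 2 / Real.pi * (|θ| / 2) ≤ Real.sin (|θ| / 2) :=
      Real.mul_le_sin (by positivity) (by linarith)
    have h2 : Real.sin (|θ| / 2) ^ 2 = Real.sin (θ / 2) ^ 2 := by
      rcases abs_cases θ with ⟨h, _⟩ | ⟨h, _⟩
      · rw [h]
      · rw [h, show -θ / 2 = -(θ/2) by ring, Real.sin_neg]; ring
    have h3 : |θ| / Real.pi ≤ Real.sin (|θ| / 2) := by
      have : 2 / Real.pi * (|θ| / 2) = |θ| / Real.pi := by field_simp
      linarith [h1, this.symm.le]
    have h4 : (|θ| / Real.pi) ^ 2 ≤ Real.sin (|θ| / 2) ^ 2 :=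
      pow_le_pow_left₀ (by positivity) h3 2
    calc θ ^ 2 / Real.pi ^ 2 = (|θ| / Real.pi) ^ 2 := by
          rw [div_pow, sq_abs]
      _ ≤ Real.sin (|θ| / 2) ^ 2 := h4
      _ = Real.sin (θ / 2) ^ 2 := h2
  -- square both sides
  have hx : 0 ≤ 4 * A * Real.sin (θ / 2) ^ 2 / s ^ 2 := by positivity
  set x : ℝ := 4 * A * Real.sin (θ / 2) ^ 2 / s ^ 2 with hx_def
  have hsq : (‖(1 - p : ℝ) + (p : ℂ) * r * Complex.exp (θ * Complex.I)‖ / s) ^ 2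
      = 1 - x := by
    rw [div_pow, habs2, hx_def]
    field_simp
  have h1x : 1 - x ≤ Real.exp (-x) := by
    have := Real.add_one_le_exp (-x)
    linarith
  have hxge : -(2 * θ ^ 2 / Real.pi ^ 2) * (A / s ^ 2) ≥ -x / 2 := by
    rw [hx_def]
    have hAs : 0 ≤ A / s ^ 2 := by positivity
    have := mul_le_mul_of_nonneg_left hsin (by positivity : (0:ℝ) ≤ 2 * (A / s ^ 2))
    have heq1 : 2 * (A / s ^ 2) * (θ ^ 2 / Real.pi ^ 2)
        = (2 * θ ^ 2 / Real.pi ^ 2) * (A / s ^ 2) := by ring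
    have heq2 : 2 * (A / s ^ 2) * Real.sin (θ / 2) ^ 2
        = 4 * A * Real.sin (θ / 2) ^ 2 / s ^ 2 / 2 := by ring
    linarith [heq1 ▸ heq2 ▸ this]
  have habs_nonneg : 0 ≤ ‖(1 - p : ℝ) + (p : ℂ) * r * Complex.exp (θ * Complex.I)‖ / s :=
    div_nonneg (norm_nonneg _) hs.le
  have hfinal : (‖(1 - p : ℝ) + (p : ℂ) * r * Complex.exp (θ * Complex.I)‖ / s) ^ 2
      ≤ (Real.exp (-(2 * θ ^ 2 / Real.pi ^ 2) * (A / s ^ 2))) ^ 2 := by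
    rw [hsq, ← Real.exp_nat_mul]
    calc 1 - x ≤ Real.exp (-x) := h1x
      _ ≤ Real.exp ((2:ℕ) * (-(2 * θ ^ 2 / Real.pi ^ 2) * (A / s ^ 2))) := by
          apply Real.exp_le_exp.mpr
          push_cast
          linarith
  calc ‖(1 - p : ℝ) + (p : ℂ) * r * Complex.exp (θ * Complex.I)‖ / s
      ≤ Real.exp (-(2 * θ ^ 2 / Real.pi ^ 2) * (A / s ^ 2)) :=
        (pow_le_pow_iff_left₀ habs_nonneg (Real.exp_pos _).le two_ne_zero).mp hfinal
    _ = Real.exp (-(2 * θ ^ 2 / Real.pi ^ 2) * ((1 - p) * p * r / ((1 - p) + p * r) ^ 2)) := by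
        rw [hA_def, hs_def, mul_div_assoc]

theorem stmt_9 (n : ℕ) (p : Fin n → ℝ) (hp : ∀ l, p l ∈ Set.Icc (0 : ℝ) 1)
    (r : ℝ) (hr : 0 < r) (θ : ℝ) (hθ : θ ∈ Set.Icc (-Real.pi) Real.pi) :
    ∏ l, ‖(1 - p l : ℝ) + (p l : ℂ) * r * Complex.exp (θ * Complex.I)‖ /
        ((1 - p l) + p l * r) ≤
      Real.exp (-(2 * θ ^ 2 / Real.pi ^ 2) *
        ∑ l, (1 - p l) * p l * r / ((1 - p l) + p l * r) ^ 2) := by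
  have habs : |θ| ≤ Real.pi := abs_le.mpr ⟨hθ.1, hθ.2⟩
  have hs : ∀ l : Fin n, 0 < (1 - p l) + p l * r := by
    intro l
    rcases lt_or_eq_of_le (hp l).2 with h | h
    · nlinarith [mul_nonneg (hp l).1 hr.le]
    · rw [h]; simpa using hr
  rw [Finset.mul_sum, Real.exp_sum]
  apply Finset.prod_le_prod
  · intro l _
    exact div_nonneg (norm_nonneg _) (hs l).le
  · intro l _
    exact factor_bound (p l) r θ (hp l).1 (hp l).2 hr habs
end

section
/- Let X and Z be random variables taking values in the non-negative integers with probability mass functions (w_k) and (v_k), where v_k > 0 for all k, and assume w_k/v_k is bounded. Fix α ≥ 2. Then the Tsallis relative entropy T_α = (1/(α-1))[∑_k (w_k/v_k)^α v_k - 1] satisfies T_α ≤ (2^α/(α-1)) (T_2 + χ_α), where T_2 = ∑_k (w_k - v_k)²/v_k and χ_α = ∑_k |w_k - v_k|^α / v_k^{α-1}. -/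
open intervalIntegral Real

-- FTC piece: ∫ u in a..b, (1+u)^(α-1) = ((1+b)^α - (1+a)^α)/α
lemma ftc1 (α : ℝ) (hα : 2 ≤ α) (a b : ℝ) :
    ∫ u in a..b, (1 + u) ^ (α - 1) = ((1 + b) ^ α - (1 + a) ^ α) / α := by
  have h1 : (∫ u in a..b, (fun x : ℝ => x ^ (α - 1)) (1 + u))
      = ∫ x in (1 + a)..(1 + b), x ^ (α - 1) :=
    intervalIntegral.integral_comp_add_left (fun x : ℝ => x ^ (α - 1)) 1
  have h2 : ∫ x in (1 + a)..(1 + b), x ^ (α - 1)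
      = ((1 + b) ^ (α - 1 + 1) - (1 + a) ^ (α - 1 + 1)) / (α - 1 + 1) :=
    integral_rpow (Or.inl (by linarith))
  rw [show (α - 1 + 1) = α by ring] at h2
  simpa [h2] using h1

lemma cont1 (α : ℝ) (hα : 2 ≤ α) : Continuous (fun u : ℝ => (1 + u) ^ (α - 1)) :=
  (Real.continuous_rpow_const (by linarith)).comp (continuous_const.add continuous_id)

lemma E1 (α : ℝ) (hα : 2 ≤ α) (s : ℝ) :
    (1 + s) ^ α - 1 - α * s = α * ∫ u in (0:ℝ)..s, ((1 + u) ^ (α - 1) - 1) := by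
  have hint : ∫ u in (0:ℝ)..s, ((1 + u) ^ (α - 1) - 1)
      = (∫ u in (0:ℝ)..s, (1 + u) ^ (α - 1)) - ∫ u in (0:ℝ)..s, (1:ℝ) := by
    apply intervalIntegral.integral_sub
    · exact (cont1 α hα).intervalIntegrable _ _
    · exact intervalIntegrable_const
  have hα0 : (α : ℝ) ≠ 0 := by positivity
  rw [hint, ftc1 α hα]
  simp only [add_zero, Real.one_rpow, intervalIntegral.integral_const, smul_eq_mul, mul_one,
    sub_zero]
  field_simp

lemma lemA (α : ℝ) (hα : 2 ≤ α) : α * (α - 1) / 2 ≤ 2 ^ α - 1 - α := by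
  have h1 : (2:ℝ) ^ α - 1 - α = α * ∫ u in (0:ℝ)..1, ((1 + u) ^ (α - 1) - 1) := by
    have := E1 α hα 1
    norm_num at this
    linarith
  have hmono : ∫ u in (0:ℝ)..1, ((α - 1) * u) ≤ ∫ u in (0:ℝ)..1, ((1 + u) ^ (α - 1) - 1) := by
    apply intervalIntegral.integral_mono_on (by norm_num)
    · exact (continuous_const.mul continuous_id).intervalIntegrable _ _
    · exact ((cont1 α hα).sub continuous_const).intervalIntegrable _ _
    · intro x hx
      have hb := one_add_mul_self_le_rpow_one_add (s := x) (by linarith [hx.1])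
        (p := α - 1) (by linarith)
      linarith
  have h2 : ∫ u in (0:ℝ)..1, ((α - 1) * u) = (α - 1) / 2 := by
    rw [intervalIntegral.integral_const_mul, integral_id]
    ring
  rw [h1]
  have hα0 : (0:ℝ) < α := by linarith
  calc α * (α - 1) / 2 = α * ((α - 1) / 2) := by ring
    _ ≤ α * ∫ u in (0:ℝ)..1, ((1 + u) ^ (α - 1) - 1) := by
        apply mul_le_mul_of_nonneg_left _ hα0.le
        rw [← h2]; exact hmono

lemma case2 (α : ℝ) (hα : 2 ≤ α) (s : ℝ) (hs0 : 0 ≤ s) (hs1 : s ≤ 1) :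
    (1 + s) ^ α - 1 - α * s ≤ (2 ^ α - 1 - α) * s ^ 2 := by
  rcases eq_or_lt_of_le hs0 with h0 | h0
  · simp [← h0]
  have hsne : s ≠ 0 := ne_of_gt h0
  set g : ℝ → ℝ := fun u => (1 + u) ^ (α - 1) - 1 with hg
  have hgc : Continuous g := (cont1 α hα).sub continuous_const
  have hsub : ∫ u in (0:ℝ)..s, g u = s * ∫ x in (0:ℝ)..1, g (s * x) := by
    have := intervalIntegral.integral_comp_mul_left (a := (0:ℝ)) (b := 1) g hsne
    rw [this]
    simp [smul_eq_mul, hsne]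
  have hptwise : ∀ x ∈ Set.Icc (0:ℝ) 1, g (s * x) ≤ s * g x := by
    intro x hx
    have hcx := (convexOn_rpow (p := α - 1) (by linarith)).2
      (Set.mem_Ici.2 (by norm_num : (0:ℝ) ≤ 1))
      (Set.mem_Ici.2 (by linarith [hx.1] : (0:ℝ) ≤ 1 + x))
      (by linarith : (0:ℝ) ≤ 1 - s) hs0 (by ring)
    simp only [smul_eq_mul] at hcx
    have heq : (1 - s) * 1 + s * (1 + x) = 1 + s * x := by ring
    rw [heq] at hcx
    simp only [hg, Real.one_rpow] at *
    nlinarith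
  have hmono : ∫ x in (0:ℝ)..1, g (s * x) ≤ ∫ x in (0:ℝ)..1, s * g x := by
    apply intervalIntegral.integral_mono_on (by norm_num) _ _ hptwise
    · exact (hgc.comp (continuous_const.mul continuous_id)).intervalIntegrable _ _
    · exact (continuous_const.mul hgc).intervalIntegrable _ _
  have hval : ∫ x in (0:ℝ)..1, g x = (2 ^ α - 1 - α) / α := by
    have := E1 α hα 1
    have hα0 : (α : ℝ) ≠ 0 := by positivity
    norm_num at this
    field_simp
    linarith
  have hI : ∫ u in (0:ℝ)..s, g u ≤ s ^ 2 * ((2 ^ α - 1 - α) / α) := by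
    rw [hsub]
    calc s * ∫ x in (0:ℝ)..1, g (s * x) ≤ s * ∫ x in (0:ℝ)..1, s * g x :=
          mul_le_mul_of_nonneg_left hmono hs0
      _ = s ^ 2 * ((2 ^ α - 1 - α) / α) := by
          rw [intervalIntegral.integral_const_mul, hval]; ring
  have hE := E1 α hα s
  have hα0 : (0:ℝ) < α := by linarith
  calc (1 + s) ^ α - 1 - α * s = α * ∫ u in (0:ℝ)..s, g u := hE
    _ ≤ α * (s ^ 2 * ((2 ^ α - 1 - α) / α)) := mul_le_mul_of_nonneg_left hI hα0.le
    _ = (2 ^ α - 1 - α) * s ^ 2 := by field_simp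

lemma case3 (α : ℝ) (hα : 2 ≤ α) (t : ℝ) (ht0 : 0 ≤ t) (ht1 : t ≤ 1) :
    t ^ α - 1 - α * (t - 1) ≤ (2 ^ α - 1 - α) * (t - 1) ^ 2 := by
  have hα0 : (0:ℝ) < α := by linarith
  have hcont : Continuous (fun u : ℝ => u ^ (α - 1)) :=
    Real.continuous_rpow_const (by linarith)
  have hftc : ∫ u in t..1, (u : ℝ) ^ (α - 1) = (1 - t ^ α) / α := by
    rw [integral_rpow (Or.inl (by linarith))]
    rw [show (α - 1 + 1) = α by ring, Real.one_rpow]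
  have hrepr : t ^ α - 1 - α * (t - 1) = α * ∫ u in t..1, (1 - u ^ (α - 1)) := by
    have hsub : ∫ u in t..1, ((1:ℝ) - u ^ (α - 1))
        = (∫ u in t..1, (1:ℝ)) - ∫ u in t..1, (u : ℝ) ^ (α - 1) := by
      apply intervalIntegral.integral_sub intervalIntegrable_const
        (hcont.intervalIntegrable _ _)
    rw [hsub, hftc]
    simp only [intervalIntegral.integral_const, smul_eq_mul, mul_one]
    field_simp
    ring
  have hpt : ∀ u ∈ Set.Icc t 1, (1:ℝ) - u ^ (α - 1) ≤ (α - 1) * (1 - u) := by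
    intro u hu
    have hb := one_add_mul_self_le_rpow_one_add (s := u - 1) (by linarith [ht0, hu.1])
      (p := α - 1) (by linarith)
    rw [show (1:ℝ) + (u - 1) = u by ring] at hb
    nlinarith
  have hmono : ∫ u in t..1, ((1:ℝ) - u ^ (α - 1)) ≤ ∫ u in t..1, (α - 1) * (1 - u) := by
    apply intervalIntegral.integral_mono_on ht1 _ _ hpt
    · exact (continuous_const.sub hcont).intervalIntegrable _ _
    · exact (continuous_const.mul (continuous_const.sub continuous_id)).intervalIntegrable _ _
  have hval : ∫ u in t..1, (α - 1) * (1 - u) = (α - 1) * ((1 - t) ^ 2 / 2) := by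
    rw [intervalIntegral.integral_const_mul]
    have : ∫ u in t..1, ((1:ℝ) - u) = (∫ u in t..1, (1:ℝ)) - ∫ u in t..1, (u:ℝ) :=
      intervalIntegral.integral_sub intervalIntegrable_const
        (continuous_id.intervalIntegrable _ _)
    rw [this, integral_id]
    simp only [intervalIntegral.integral_const, smul_eq_mul, mul_one]
    ring
  have h1 : t ^ α - 1 - α * (t - 1) ≤ α * ((α - 1) * ((1 - t) ^ 2 / 2)) := by
    rw [hrepr]
    apply mul_le_mul_of_nonneg_left _ hα0.le
    rw [← hval]; exact hmono
  have h2 := lemA α hα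
  nlinarith [sq_nonneg (1 - t)]

lemma keypt (α : ℝ) (hα : 2 ≤ α) (t : ℝ) (ht : 0 ≤ t) :
    t ^ α ≤ 1 + α * (t - 1) + 2 ^ α * ((t - 1) ^ 2 + |t - 1| ^ α) := by
  have h2α : (0:ℝ) < 2 ^ α := Real.rpow_pos_of_pos (by norm_num) α
  have habs : (0:ℝ) ≤ |t - 1| ^ α := Real.rpow_nonneg (abs_nonneg _) α
  rcases le_total t 1 with h1 | h1
  · have := case3 α hα t ht h1
    nlinarith [sq_nonneg (t - 1)]
  rcases le_total t 2 with h2 | h2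
  · have := case2 α hα (t - 1) (by linarith) (by linarith)
    rw [show (1:ℝ) + (t - 1) = t by ring] at this
    nlinarith [sq_nonneg (t - 1)]
  · have hkey : t ^ α ≤ 2 ^ α * (t - 1) ^ α := by
      have h1 : t ^ α ≤ (2 * (t - 1)) ^ α :=
        Real.rpow_le_rpow ht (by linarith) (by linarith)
      rwa [Real.mul_rpow (by norm_num) (by linarith)] at h1
    have habs' : |t - 1| = t - 1 := abs_of_nonneg (by linarith)
    rw [habs']
    nlinarith [sq_nonneg (t - 1)]

lemma perk (α : ℝ) (hα : 2 ≤ α) (w v : ℝ) (hw : 0 ≤ w) (hv : 0 < v) :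
    (w / v) ^ α * v ≤ v + α * (w - v) + 2 ^ α * ((w - v) ^ 2 / v + |w - v| ^ α / v ^ (α - 1)) := by
  have hvne : v ≠ 0 := hv.ne'
  have e1 : (w / v - 1) * v = w - v := by field_simp
  have e2 : (w / v - 1) ^ 2 * v = (w - v) ^ 2 / v := by field_simp
  have e3 : |w / v - 1| ^ α * v = |w - v| ^ α / v ^ (α - 1) := by
    have h4 : w / v - 1 = (w - v) / v := by field_simp
    rw [h4, abs_div, abs_of_pos hv, Real.div_rpow (abs_nonneg _) hv.le]
    have h5 : v ^ α = v ^ (α - 1) * v := by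
      rw [← Real.rpow_add_one hvne (α - 1), sub_add_cancel]
    rw [h5]
    have h6 : v ^ (α - 1) ≠ 0 := (Real.rpow_pos_of_pos hv _).ne'
    field_simp
  calc (w / v) ^ α * v
      ≤ (1 + α * (w / v - 1) + 2 ^ α * ((w / v - 1) ^ 2 + |w / v - 1| ^ α)) * v :=
        mul_le_mul_of_nonneg_right (keypt α hα _ (div_nonneg hw hv.le)) hv.le
    _ = v + α * ((w / v - 1) * v) + 2 ^ α * ((w / v - 1) ^ 2 * v + |w / v - 1| ^ α * v) := by
        ring
    _ = v + α * (w - v) + 2 ^ α * ((w - v) ^ 2 / v + |w - v| ^ α / v ^ (α - 1)) := by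
        rw [e1, e2, e3]

lemma e2' (w v : ℝ) (hv : 0 < v) : (w - v) ^ 2 / v = (w / v - 1) ^ 2 * v := by
  field_simp

lemma e3' (α w v : ℝ) (hv : 0 < v) :
    |w - v| ^ α / v ^ (α - 1) = |w / v - 1| ^ α * v := by
  have hvne : v ≠ 0 := hv.ne'
  have h4 : w / v - 1 = (w - v) / v := by field_simp
  rw [h4, abs_div, abs_of_pos hv, Real.div_rpow (abs_nonneg _) hv.le]
  have h5 : v ^ α = v ^ (α - 1) * v := by
    rw [← Real.rpow_add_one hvne (α - 1), sub_add_cancel]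
  rw [h5]
  have h6 : v ^ (α - 1) ≠ 0 := (Real.rpow_pos_of_pos hv _).ne'
  field_simp

theorem stmt_16 (w v : ℕ → ℝ)
    (hw : ∀ k, 0 ≤ w k) (hv : ∀ k, 0 < v k)
    (hw1 : ∑' k, w k = 1) (hv1 : ∑' k, v k = 1)
    (hbdd : ∃ M : ℝ, ∀ k, w k / v k ≤ M)
    (α : ℝ) (hα : 2 ≤ α) :
    (1 / (α - 1)) * ((∑' k, (w k / v k) ^ α * v k) - 1) ≤
      (2 ^ α / (α - 1)) *
        ((∑' k, (w k - v k) ^ 2 / v k) +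
          ∑' k, |w k - v k| ^ α / v k ^ (α - 1)) := by
  obtain ⟨M, hM⟩ := hbdd
  have hα0 : (0:ℝ) < α := by linarith
  have ht0 : ∀ k, 0 ≤ w k / v k := fun k => div_nonneg (hw k) (hv k).le
  have hM0 : 0 ≤ M := le_trans (ht0 0) (hM 0)
  have Sv : Summable v := by
    by_contra h
    rw [tsum_eq_zero_of_not_summable h] at hv1
    norm_num at hv1
  have Sw : Summable w := by
    by_contra h
    rw [tsum_eq_zero_of_not_summable h] at hw1
    norm_num at hw1
  have habs : ∀ k, |w k / v k - 1| ≤ M + 1 := by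
    intro k
    rw [abs_le]
    constructor
    · linarith [ht0 k]
    · linarith [hM k]
  -- summability of the three series
  have Sf : Summable (fun k => (w k / v k) ^ α * v k) := by
    apply Summable.of_nonneg_of_le
      (fun k => mul_nonneg (Real.rpow_nonneg (ht0 k) α) (hv k).le)
      (fun k => ?_) (Sv.mul_left (M ^ α))
    exact mul_le_mul_of_nonneg_right
      (Real.rpow_le_rpow (ht0 k) (hM k) hα0.le) (hv k).le
  have Sg : Summable (fun k => (w k - v k) ^ 2 / v k) := by
    apply Summable.of_nonneg_of_le
      (fun k => div_nonneg (sq_nonneg _) (hv k).le)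
      (fun k => ?_) (Sv.mul_left ((M + 1) ^ 2))
    rw [e2' (w k) (v k) (hv k)]
    exact mul_le_mul_of_nonneg_right
      (sq_le_sq' (by linarith [habs k, abs_nonneg (w k / v k - 1), neg_abs_le (w k / v k - 1)])
        (le_trans (le_abs_self _) (habs k))) (hv k).le
  have Sh : Summable (fun k => |w k - v k| ^ α / v k ^ (α - 1)) := by
    apply Summable.of_nonneg_of_le
      (fun k => div_nonneg (Real.rpow_nonneg (abs_nonneg _) α)
        (Real.rpow_nonneg (hv k).le _))
      (fun k => ?_) (Sv.mul_left ((M + 1) ^ α))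
    rw [e3' α (w k) (v k) (hv k)]
    exact mul_le_mul_of_nonneg_right
      (Real.rpow_le_rpow (abs_nonneg _) (habs k) hα0.le) (hv k).le
  -- pointwise bound
  have hpt : ∀ k, (w k / v k) ^ α * v k ≤
      v k + α * (w k - v k) +
        2 ^ α * ((w k - v k) ^ 2 / v k + |w k - v k| ^ α / v k ^ (α - 1)) :=
    fun k => perk α hα (w k) (v k) (hw k) (hv k)
  have SF : Summable (fun k => v k + α * (w k - v k) +
      2 ^ α * ((w k - v k) ^ 2 / v k + |w k - v k| ^ α / v k ^ (α - 1))) :=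
    (Sv.add (((Sw.sub Sv)).mul_left α)).add ((Sg.add Sh).mul_left (2 ^ α))
  have hsum : (∑' k, (w k / v k) ^ α * v k) ≤
      ∑' k, (v k + α * (w k - v k) +
        2 ^ α * ((w k - v k) ^ 2 / v k + |w k - v k| ^ α / v k ^ (α - 1))) :=
    Summable.tsum_le_tsum hpt Sf SF
  have hval : (∑' k, (v k + α * (w k - v k) +
      2 ^ α * ((w k - v k) ^ 2 / v k + |w k - v k| ^ α / v k ^ (α - 1)))) =
      1 + 2 ^ α * ((∑' k, (w k - v k) ^ 2 / v k) +
        ∑' k, |w k - v k| ^ α / v k ^ (α - 1)) := by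
    rw [Summable.tsum_add (Sv.add ((Sw.sub Sv).mul_left α)) ((Sg.add Sh).mul_left (2 ^ α)),
      Summable.tsum_add Sv ((Sw.sub Sv).mul_left α), tsum_mul_left, Summable.tsum_sub Sw Sv,
      tsum_mul_left, Summable.tsum_add Sg Sh, hw1, hv1]
    ring
  rw [hval] at hsum
  have hkey : (∑' k, (w k / v k) ^ α * v k) - 1 ≤
      2 ^ α * ((∑' k, (w k - v k) ^ 2 / v k) +
        ∑' k, |w k - v k| ^ α / v k ^ (α - 1)) := by linarith
  have hinv : (0:ℝ) ≤ 1 / (α - 1) := by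
    have h1 : (0:ℝ) < α - 1 := by linarith
    positivity
  calc (1 / (α - 1)) * ((∑' k, (w k / v k) ^ α * v k) - 1)
      ≤ (1 / (α - 1)) * (2 ^ α * ((∑' k, (w k - v k) ^ 2 / v k) +
          ∑' k, |w k - v k| ^ α / v k ^ (α - 1))) :=
        mul_le_mul_of_nonneg_left hkey hinv
    _ = (2 ^ α / (α - 1)) * ((∑' k, (w k - v k) ^ 2 / v k) +
          ∑' k, |w k - v k| ^ α / v k ^ (α - 1)) := by ring
end

section
/- Let (w_k) and (v_k) be probability distributions on the non-negative integers with all v_k > 0, and assume the series below converge. Then the difference of entropies H(v) - H(w) := -∑ v_k log v_k + ∑ w_k log w_k satisfies H(v) - H(w) ≤ χ² + H₂ · √(χ²), where χ² = ∑_k (w_k - v_k)²/v_k and H₂² = ∑_k v_k (log v_k)². -/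
open Real in
lemma cs_tsum (f g : ℕ → ℝ) (hf : ∀ k, 0 ≤ f k) (hg : ∀ k, 0 ≤ g k)
    (h1 : Summable fun k => f k ^ 2) (h2 : Summable fun k => g k ^ 2) :
    Summable (fun k => f k * g k) ∧
      ∑' k, f k * g k ≤ Real.sqrt (∑' k, f k ^ 2) * Real.sqrt (∑' k, g k ^ 2) := by
  have hs : Summable (fun k => f k * g k) := by
    refine Summable.of_nonneg_of_le (fun k => mul_nonneg (hf k) (hg k))
      (fun k => ?_) ((h1.add h2).div_const 2)
    nlinarith [sq_nonneg (f k - g k)]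
  refine ⟨hs, Summable.tsum_le_of_sum_le hs fun s => ?_⟩
  have hfin : ∑ k ∈ s, f k * g k ≤
      Real.sqrt (∑ k ∈ s, f k ^ 2) * Real.sqrt (∑ k ∈ s, g k ^ 2) := by
    have h := Finset.sum_mul_sq_le_sq_mul_sq s f g
    have hnn : 0 ≤ ∑ k ∈ s, f k * g k :=
      Finset.sum_nonneg fun k _ => mul_nonneg (hf k) (hg k)
    calc ∑ k ∈ s, f k * g k = Real.sqrt ((∑ k ∈ s, f k * g k) ^ 2) :=
          (Real.sqrt_sq hnn).symm
      _ ≤ Real.sqrt ((∑ k ∈ s, f k ^ 2) * ∑ k ∈ s, g k ^ 2) := Real.sqrt_le_sqrt h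
      _ = _ := Real.sqrt_mul (Finset.sum_nonneg fun k _ => sq_nonneg _) _
  refine hfin.trans ?_
  gcongr
  · exact Summable.sum_le_tsum _ (fun i _ => sq_nonneg _) h1
  · exact Summable.sum_le_tsum _ (fun i _ => sq_nonneg _) h2

theorem stmt_17 (w v : ℕ → ℝ)
    (hw : ∀ k, 0 ≤ w k) (hv : ∀ k, 0 < v k)
    (hw1 : ∑' k, w k = 1) (hv1 : ∑' k, v k = 1)
    (h1 : Summable fun k => v k * Real.log (v k))
    (h2 : Summable fun k => w k * Real.log (w k))
    (h3 : Summable fun k => (w k - v k) ^ 2 / v k)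
    (h4 : Summable fun k => v k * (Real.log (v k)) ^ 2) :
    (-∑' k, v k * Real.log (v k)) - (-∑' k, w k * Real.log (w k)) ≤
      (∑' k, (w k - v k) ^ 2 / v k) +
        Real.sqrt (∑' k, v k * (Real.log (v k)) ^ 2) *
          Real.sqrt (∑' k, (w k - v k) ^ 2 / v k) := by
  have hsw : Summable w := by
    by_contra h; rw [tsum_eq_zero_of_not_summable h] at hw1; norm_num at hw1
  have hsv : Summable v := by
    by_contra h; rw [tsum_eq_zero_of_not_summable h] at hv1; norm_num at hv1
  -- Cauchy–Schwarz part
  set f : ℕ → ℝ := fun k => Real.sqrt (v k) * |Real.log (v k)| with hfdef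
  set g : ℕ → ℝ := fun k => |w k - v k| / Real.sqrt (v k) with hgdef
  have hf2 : (fun k => f k ^ 2) = fun k => v k * (Real.log (v k)) ^ 2 := by
    funext k
    rw [hfdef, mul_pow, sq_abs, Real.sq_sqrt (hv k).le]
  have hg2 : (fun k => g k ^ 2) = fun k => (w k - v k) ^ 2 / v k := by
    funext k
    rw [hgdef, div_pow, sq_abs, Real.sq_sqrt (hv k).le]
  have hcs := cs_tsum f g (fun k => mul_nonneg (Real.sqrt_nonneg _) (abs_nonneg _))
    (fun k => div_nonneg (abs_nonneg _) (Real.sqrt_nonneg _))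
    (by rw [hf2]; exact h4) (by rw [hg2]; exact h3)
  have hfg : (fun k => f k * g k) = fun k => |(w k - v k) * Real.log (v k)| := by
    funext k
    have hsq : Real.sqrt (v k) ≠ 0 := ne_of_gt (Real.sqrt_pos.mpr (hv k))
    rw [hfdef, hgdef, abs_mul]
    field_simp
  have hLabs : Summable (fun k => |(w k - v k) * Real.log (v k)|) := hfg ▸ hcs.1
  have hL : Summable (fun k => (w k - v k) * Real.log (v k)) := hLabs.of_abs
  have hLle : ∑' k, (w k - v k) * Real.log (v k) ≤
      Real.sqrt (∑' k, v k * (Real.log (v k)) ^ 2) *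
        Real.sqrt (∑' k, (w k - v k) ^ 2 / v k) := by
    have := hcs.2
    rw [hfg, hf2, hg2] at this
    exact le_trans (Summable.tsum_le_tsum (fun k => le_abs_self _) hL hLabs) this
  -- entropy difference part
  have ha : Summable (fun k => w k * Real.log (w k) - w k * Real.log (v k)) := by
    have : (fun k => w k * Real.log (w k) - w k * Real.log (v k)) =
        fun k => (w k * Real.log (w k) - v k * Real.log (v k)) -
          (w k - v k) * Real.log (v k) := by funext k; ring
    rw [this]; exact (h2.sub h1).sub hL
  have hb : Summable (fun k => (w k - v k) + (w k - v k) ^ 2 / v k) :=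
    (hsw.sub hsv).add h3
  have hab : ∀ k, w k * Real.log (w k) - w k * Real.log (v k) ≤
      (w k - v k) + (w k - v k) ^ 2 / v k := by
    intro k
    have hvk := hv k
    rcases eq_or_lt_of_le (hw k) with h0 | hwk
    · rw [← h0]
      have : (0:ℝ) - v k + (0 - v k) ^ 2 / v k = 0 := by field_simp; ring
      simpa using this.ge
    · have hlog : Real.log (w k) - Real.log (v k) ≤ (w k - v k) / v k := by
        rw [← Real.log_div hwk.ne' hvk.ne']
        have := Real.log_le_sub_one_of_pos (x := w k / v k) (by positivity)
        calc Real.log (w k / v k) ≤ w k / v k - 1 := this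
          _ = (w k - v k) / v k := by field_simp
      have := mul_le_mul_of_nonneg_left hlog hwk.le
      calc w k * Real.log (w k) - w k * Real.log (v k)
          = w k * (Real.log (w k) - Real.log (v k)) := by ring
        _ ≤ w k * ((w k - v k) / v k) := this
        _ = (w k - v k) + (w k - v k) ^ 2 / v k := by field_simp; ring
  have hta : ∑' k, (w k * Real.log (w k) - w k * Real.log (v k)) ≤
      ∑' k, ((w k - v k) + (w k - v k) ^ 2 / v k) := Summable.tsum_le_tsum hab ha hb
  have htb : ∑' k, ((w k - v k) + (w k - v k) ^ 2 / v k) =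
      ∑' k, (w k - v k) ^ 2 / v k := by
    rw [Summable.tsum_add (hsw.sub hsv) h3, Summable.tsum_sub hsw hsv, hw1, hv1]
    ring
  have hsplit : ∑' k, (w k * Real.log (w k) - w k * Real.log (v k)) =
      (∑' k, w k * Real.log (w k) - ∑' k, v k * Real.log (v k)) -
        ∑' k, (w k - v k) * Real.log (v k) := by
    have : (fun k => w k * Real.log (w k) - w k * Real.log (v k)) =
        fun k => (w k * Real.log (w k) - v k * Real.log (v k)) -
          (w k - v k) * Real.log (v k) := by funext k; ring
    rw [this, Summable.tsum_sub (h2.sub h1) hL, Summable.tsum_sub h2 h1]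
  rw [htb, hsplit] at hta
  linarith
end

section
/- Let Z be Poisson with parameter λ, 0 < λ ≤ 1, and set v_k = P(Z = k) = (λ^k/k!)e^{-λ}. Then the second informational moment H₂(Z)² = ∑_{k≥0} v_k (log v_k)² satisfies H₂(Z) ≤ 5√λ · log(e/λ). -/
/-- `k! ≤ exp (k(k-1)/2)`. -/
lemma aux_fact_le_exp (k : ℕ) : (k.factorial : ℝ) ≤ Real.exp ((k : ℝ) * ((k : ℝ) - 1) / 2) := by
  induction k with
  | zero => simp
  | succ n ih =>
    have h1 : ((n + 1).factorial : ℝ) = ((n : ℝ) + 1) * n.factorial := by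
      push_cast [Nat.factorial_succ]; ring
    have h2 : ((n : ℝ) + 1) ≤ Real.exp n := Real.add_one_le_exp (n : ℝ)
    calc ((n + 1).factorial : ℝ) = ((n : ℝ) + 1) * n.factorial := h1
      _ ≤ Real.exp n * Real.exp ((n : ℝ) * ((n : ℝ) - 1) / 2) :=
          mul_le_mul h2 ih (by positivity) (Real.exp_pos _).le
      _ = Real.exp ((n : ℝ) + (n : ℝ) * ((n : ℝ) - 1) / 2) := (Real.exp_add _ _).symm
      _ = Real.exp (((n + 1 : ℕ) : ℝ) * (((n + 1 : ℕ) : ℝ) - 1) / 2) := by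
          congr 1; push_cast; ring

noncomputable def auxW (k : ℕ) : ℝ := ((k : ℝ) * ((k : ℝ) + 1)) ^ 2 / (4 * k.factorial)

lemma auxW_nonneg (k : ℕ) : 0 ≤ auxW k := by
  unfold auxW; positivity

lemma auxW_tail (n : ℕ) : auxW (n + 5) ≤ (15 / 8) * (1 / 2 : ℝ) ^ n := by
  induction n with
  | zero => unfold auxW; norm_num [Nat.factorial]
  | succ m ih =>
    have hF : (0 : ℝ) < ((m + 5).factorial : ℝ) := by positivity
    have hfac : (((m + 6)).factorial : ℝ) = ((m : ℝ) + 6) * ((m + 5).factorial : ℝ) := by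
      have : (m + 6).factorial = (m + 6) * (m + 5).factorial := by
        rw [show m + 6 = (m + 5) + 1 by ring, Nat.factorial_succ]
      rw [this]; push_cast; ring
    have hpoly : 2 * ((m : ℝ) + 7) ^ 2 ≤ ((m : ℝ) + 6) * ((m : ℝ) + 5) ^ 2 := by
      have hm : (0 : ℝ) ≤ (m : ℝ) := Nat.cast_nonneg m
      nlinarith [sq_nonneg (m : ℝ), mul_nonneg hm hm]
    have hstep : auxW (m + 6) ≤ (1 / 2) * auxW (m + 5) := by
      have hR : (1 / 2 : ℝ) * auxW (m + 5) =
          (((m : ℝ) + 5) * ((m : ℝ) + 6)) ^ 2 / (8 * ((m + 5).factorial : ℝ)) := by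
        unfold auxW; push_cast; field_simp; ring
      have hLeq : auxW (m + 6) =
          (((m : ℝ) + 6) * ((m : ℝ) + 7)) ^ 2 / (4 * (((m : ℝ) + 6) * ((m + 5).factorial : ℝ))) := by
        unfold auxW; rw [hfac]; push_cast; ring_nf
      rw [hR, hLeq, div_le_div_iff₀ (by positivity) (by positivity)]
      have hint := mul_le_mul_of_nonneg_right
        (mul_le_mul_of_nonneg_right hpoly (by positivity : (0:ℝ) ≤ ((m : ℝ) + 6) ^ 2))
        hF.le
      nlinarith [hint]
    calc auxW (m + 1 + 5) = auxW (m + 6) := by norm_num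
      _ ≤ (1 / 2) * auxW (m + 5) := hstep
      _ ≤ (1 / 2) * ((15 / 8) * (1 / 2 : ℝ) ^ m) := by linarith [ih]
      _ = (15 / 8) * (1 / 2 : ℝ) ^ (m + 1) := by ring

theorem stmt_19 (lam : ℝ) (h0 : 0 < lam) (h1 : lam ≤ 1) :
    Real.sqrt (∑' k : ℕ,
        (lam ^ k / (Nat.factorial k) * Real.exp (-lam)) *
          (Real.log (lam ^ k / (Nat.factorial k) * Real.exp (-lam))) ^ 2) ≤
      5 * Real.sqrt lam * Real.log (Real.exp 1 / lam) := by
  set L : ℝ := 1 - Real.log lam with hLdef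
  have hlogle : Real.log lam ≤ 0 := Real.log_nonpos h0.le h1
  have hL1 : 1 ≤ L := by rw [hLdef]; linarith
  have hL0 : 0 < L := lt_of_lt_of_le one_pos hL1
  have hL2 : 1 ≤ L ^ 2 := by nlinarith
  have hlogE : Real.log (Real.exp 1 / lam) = L := by
    rw [Real.log_div (Real.exp_ne_zero 1) h0.ne', Real.log_exp, hLdef]
  clear_value L
  set t : ℕ → ℝ := fun k =>
    (lam ^ k / (Nat.factorial k) * Real.exp (-lam)) *
      (Real.log (lam ^ k / (Nat.factorial k) * Real.exp (-lam))) ^ 2 with htdef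
  have hexple : Real.exp (-lam) ≤ 1 := by
    rw [show (1:ℝ) = Real.exp 0 by simp]; exact Real.exp_le_exp.mpr (by linarith)
  have ht_nonneg : ∀ k, 0 ≤ t k := by
    intro k
    rw [htdef]
    have : (0:ℝ) ≤ lam ^ k / (Nat.factorial k) * Real.exp (-lam) := by positivity
    exact mul_nonneg this (sq_nonneg _)
  -- key pointwise bound for k ≥ 1
  have key : ∀ k : ℕ, 1 ≤ k → t k ≤ lam * L ^ 2 * auxW k := by
    intro k hk
    have hk1 : (1 : ℝ) ≤ (k : ℝ) := by exact_mod_cast hk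
    have hfacpos : (0 : ℝ) < (k.factorial : ℝ) := by positivity
    have hlogv : Real.log (lam ^ k / (Nat.factorial k) * Real.exp (-lam))
        = (k : ℝ) * Real.log lam - Real.log (k.factorial : ℝ) - lam := by
      rw [Real.log_mul (by positivity) (Real.exp_ne_zero _), Real.log_div (by positivity)
        hfacpos.ne', Real.log_pow, Real.log_exp]
      ring
    set A : ℝ := lam + Real.log (k.factorial : ℝ) - (k : ℝ) * Real.log lam with hAdef
    have hsq : (Real.log (lam ^ k / (Nat.factorial k) * Real.exp (-lam))) ^ 2 = A ^ 2 := by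
      rw [hlogv, hAdef]; ring
    have hlogfact : Real.log (k.factorial : ℝ) ≤ (k : ℝ) * ((k : ℝ) - 1) / 2 :=
      (Real.log_le_iff_le_exp hfacpos).mpr (aux_fact_le_exp k)
    have hlogfact0 : 0 ≤ Real.log (k.factorial : ℝ) :=
      Real.log_nonneg (by exact_mod_cast Nat.one_le_iff_ne_zero.mpr (Nat.factorial_ne_zero k))
    have hA0 : 0 ≤ A := by
      rw [hAdef]; nlinarith
    have hAle : A ≤ ((k : ℝ) * ((k : ℝ) + 1) / 2) * L := by
      rw [hAdef, hLdef]
      nlinarith [mul_nonneg (by nlinarith : (0:ℝ) ≤ (k:ℝ) * ((k:ℝ) - 1) / 2)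
        (neg_nonneg.mpr hlogle)]
    clear_value A
    have hA2 : A ^ 2 ≤ ((k : ℝ) * ((k : ℝ) + 1) / 2) ^ 2 * L ^ 2 := by
      calc A ^ 2 ≤ (((k : ℝ) * ((k : ℝ) + 1) / 2) * L) ^ 2 := by
            exact pow_le_pow_left₀ hA0 hAle 2
        _ = ((k : ℝ) * ((k : ℝ) + 1) / 2) ^ 2 * L ^ 2 := by ring
    have hvle : lam ^ k / (Nat.factorial k) * Real.exp (-lam) ≤ lam / (k.factorial : ℝ) := by
      have h3 : lam ^ k ≤ lam := by
        calc lam ^ k ≤ lam ^ 1 := pow_le_pow_of_le_one h0.le h1 hk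
          _ = lam := pow_one lam
      calc lam ^ k / (Nat.factorial k) * Real.exp (-lam)
          ≤ lam ^ k / (Nat.factorial k) * 1 :=
            mul_le_mul_of_nonneg_left hexple (by positivity)
        _ = lam ^ k / (Nat.factorial k) := by ring
        _ ≤ lam / (k.factorial : ℝ) := by gcongr
    have htk : t k = (lam ^ k / (Nat.factorial k) * Real.exp (-lam)) * A ^ 2 := by
      rw [htdef]; beta_reduce; rw [hsq]
    calc t k = (lam ^ k / (Nat.factorial k) * Real.exp (-lam)) * A ^ 2 := htk
      _ ≤ (lam / (k.factorial : ℝ)) * (((k : ℝ) * ((k : ℝ) + 1) / 2) ^ 2 * L ^ 2) :=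
          mul_le_mul hvle hA2 (sq_nonneg _) (by positivity)
      _ = lam * L ^ 2 * auxW k := by
          unfold auxW; field_simp; ring
  -- bound for k = 0
  have key0 : t 0 ≤ lam * L ^ 2 := by
    have h2 : t 0 = Real.exp (-lam) * lam ^ 2 := by
      rw [htdef]
      norm_num [Real.log_exp]
    have h4 : lam ^ 2 ≤ lam := by nlinarith
    have h5 : lam ≤ lam * L ^ 2 := le_mul_of_one_le_right h0.le hL2
    calc t 0 = Real.exp (-lam) * lam ^ 2 := h2
      _ ≤ 1 * lam ^ 2 := mul_le_mul_of_nonneg_right hexple (sq_nonneg _)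
      _ = lam ^ 2 := one_mul _
      _ ≤ lam := h4
      _ ≤ lam * L ^ 2 := h5
  clear_value t
  -- summability
  have hWsum : Summable auxW := by
    rw [← summable_nat_add_iff 5]
    exact Summable.of_nonneg_of_le (fun n => auxW_nonneg _) auxW_tail
      ((summable_geometric_two).mul_left (15 / 8))
  have hfacsum : Summable (fun k : ℕ => (1 : ℝ) / k.factorial) := by
    simpa using Real.summable_pow_div_factorial 1
  have hBsum : Summable (fun k : ℕ => lam * L ^ 2 * (auxW k + 1 / k.factorial)) :=
    ((hWsum.add hfacsum).mul_left _)
  have hT : Summable t := by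
    apply Summable.of_nonneg_of_le ht_nonneg _ hBsum
    intro k
    rcases Nat.eq_zero_or_pos k with hk | hk
    · subst hk
      have he : auxW 0 + 1 / ((Nat.factorial 0 : ℕ) : ℝ) = 1 := by unfold auxW; norm_num
      rw [he, mul_one]; exact key0
    · calc t k ≤ lam * L ^ 2 * auxW k := key k hk
        _ ≤ lam * L ^ 2 * (auxW k + 1 / k.factorial) := by
            apply mul_le_mul_of_nonneg_left _ (by positivity)
            have : (0:ℝ) ≤ 1 / (k.factorial : ℝ) := by positivity
            linarith
  -- sum bound
  have hsplit := Summable.sum_add_tsum_nat_add 5 hT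
  have hhead : ∑ i ∈ Finset.range 5, t i ≤ lam * L ^ 2 * (50 / 3) := by
    have e1 : auxW 1 = 1 := by unfold auxW; norm_num [Nat.factorial]
    have e2 : auxW 2 = 9 / 2 := by unfold auxW; norm_num [Nat.factorial]
    have e3 : auxW 3 = 6 := by unfold auxW; norm_num [Nat.factorial]
    have e4 : auxW 4 = 25 / 6 := by unfold auxW; norm_num [Nat.factorial]
    have b1 := key 1 le_rfl
    have b2 := key 2 (by norm_num)
    have b3 := key 3 (by norm_num)
    have b4 := key 4 (by norm_num)
    rw [e1] at b1; rw [e2] at b2; rw [e3] at b3; rw [e4] at b4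
    rw [Finset.sum_range_succ, Finset.sum_range_succ, Finset.sum_range_succ,
      Finset.sum_range_succ, Finset.sum_range_one]
    linarith
  have htail : ∑' i : ℕ, t (i + 5) ≤ lam * L ^ 2 * (15 / 4) := by
    have hTs : Summable (fun i : ℕ => t (i + 5)) := (summable_nat_add_iff 5).mpr hT
    have hg : Summable (fun i : ℕ => lam * L ^ 2 * ((15 / 8) * (1 / 2 : ℝ) ^ i)) :=
      ((summable_geometric_two).mul_left _).mul_left _
    have hle : ∀ i : ℕ, t (i + 5) ≤ lam * L ^ 2 * ((15 / 8) * (1 / 2 : ℝ) ^ i) := by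
      intro i
      calc t (i + 5) ≤ lam * L ^ 2 * auxW (i + 5) := key (i + 5) (by omega)
        _ ≤ lam * L ^ 2 * ((15 / 8) * (1 / 2 : ℝ) ^ i) :=
            mul_le_mul_of_nonneg_left (auxW_tail i) (by positivity)
    calc ∑' i : ℕ, t (i + 5) ≤ ∑' i : ℕ, lam * L ^ 2 * ((15 / 8) * (1 / 2 : ℝ) ^ i) :=
          Summable.tsum_le_tsum hle hTs hg
      _ = lam * L ^ 2 * ((15 / 8) * ∑' i : ℕ, (1 / 2 : ℝ) ^ i) := by
          rw [tsum_mul_left, tsum_mul_left]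
      _ = lam * L ^ 2 * (15 / 4) := by rw [tsum_geometric_two]; ring
  have hS : ∑' k, t k ≤ 25 * lam * L ^ 2 := by
    rw [← hsplit]
    nlinarith [hhead, htail]
  -- finish with sqrt
  rw [hlogE]
  have hsq : Real.sqrt lam ^ 2 = lam := Real.sq_sqrt h0.le
  have hrhs : (5 * Real.sqrt lam * L) ^ 2 = 25 * lam * L ^ 2 := by
    linear_combination (25 * L ^ 2) * hsq
  calc Real.sqrt (∑' k, t k) ≤ Real.sqrt ((5 * Real.sqrt lam * L) ^ 2) := by
        apply Real.sqrt_le_sqrt; rw [hrhs]; exact hS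
    _ = 5 * Real.sqrt lam * L := Real.sqrt_sq (by positivity)
end
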